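/- Let M be a natural number, let μ_0, …, μ_M ∈ [-1,1] be distinct points and ω_0, …, ω_M real weights such that Σ_{m=0}^{M} ω_m p(μ_m) = ∫_{-1}^{1} p(μ) dμ for every polynomial p of degree at most 2M+1. Let u : [-1,1] → ℝ be continuous and let I_M u be the unique polynomial of degree at most M with (I_M u)(μ_m) = u(μ_m) for all m. Then for every polynomial φ of degree at most M, | ∫_{-1}^{1} u(μ) φ(μ) dμ - Σ_{m=0}^{M} ω_m u(μ_m) φ(μ_m) | ≤ ( ∫_{-1}^{1} (u(μ) - (I_M u)(μ))^2 dμ )^{1/2} · ( ∫_{-1}^{1} φ(μ)^2 dμ )^{1/2}. -/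

import Mathlib

open MeasureTheory Polynomial Set

/-- Cauchy–Schwarz for interval integrals of continuous-on-interval functions. -/
lemma cauchy_schwarz_interval {f g : ℝ → ℝ}
    (hf : ContinuousOn f (Icc (-1 : ℝ) 1)) (hg : ContinuousOn g (Icc (-1 : ℝ) 1)) :
    |∫ x in (-1 : ℝ)..1, f x * g x|
      ≤ Real.sqrt (∫ x in (-1 : ℝ)..1, f x ^ 2) * Real.sqrt (∫ x in (-1 : ℝ)..1, g x ^ 2) := by
  have huIcc : uIcc (-1 : ℝ) 1 = Icc (-1 : ℝ) 1 := uIcc_of_le (by norm_num)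
  have hif : IntervalIntegrable f volume (-1) 1 := (huIcc ▸ hf).intervalIntegrable
  have hig : IntervalIntegrable g volume (-1) 1 := (huIcc ▸ hg).intervalIntegrable
  have hif2 : IntervalIntegrable (fun x => f x ^ 2) volume (-1) 1 :=
    (huIcc ▸ (hf.pow 2)).intervalIntegrable
  have hig2 : IntervalIntegrable (fun x => g x ^ 2) volume (-1) 1 :=
    (huIcc ▸ (hg.pow 2)).intervalIntegrable
  have hifg : IntervalIntegrable (fun x => f x * g x) volume (-1) 1 :=
    (huIcc ▸ (hf.mul hg)).intervalIntegrable
  set A := ∫ x in (-1 : ℝ)..1, f x ^ 2 with hA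
  set B := ∫ x in (-1 : ℝ)..1, f x * g x with hB
  set C := ∫ x in (-1 : ℝ)..1, g x ^ 2 with hC
  have hA0 : 0 ≤ A := intervalIntegral.integral_nonneg (by norm_num)
    (fun x _ => sq_nonneg _)
  have hC0 : 0 ≤ C := intervalIntegral.integral_nonneg (by norm_num)
    (fun x _ => sq_nonneg _)
  have key : ∀ t : ℝ, 0 ≤ C * (t * t) + (2 * B) * t + A := by
    intro t
    have hexp : (∫ x in (-1 : ℝ)..1, (f x + t * g x) ^ 2)
        = C * (t * t) + (2 * B) * t + A := by
      have heq : ∀ x : ℝ, (f x + t * g x) ^ 2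
          = g x ^ 2 * (t * t) + f x * g x * (2 * t) + f x ^ 2 := by intro x; ring
      rw [intervalIntegral.integral_congr (fun x _ => heq x),
        intervalIntegral.integral_add ((hig2.mul_const _).add (hifg.mul_const _)) hif2,
        intervalIntegral.integral_add (hig2.mul_const _) (hifg.mul_const _),
        intervalIntegral.integral_mul_const, intervalIntegral.integral_mul_const]
      show C * (t * t) + B * (2 * t) + A = _
      ring
    rw [← hexp]
    exact intervalIntegral.integral_nonneg (by norm_num) (fun x _ => sq_nonneg _)
  have hdisc : discrim C (2 * B) A ≤ 0 := by
    rcases eq_or_lt_of_le hC0 with hCeq | hCpos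
    · -- C = 0 : then 2Bt + A ≥ 0 for all t forces B = 0
      have hBzero : B = 0 := by
        by_contra hBne
        have := key ((-A - 1) / (2 * B))
        rw [← hCeq] at this
        have h2B : (2 * B) ≠ 0 := by simpa using hBne
        field_simp at this
        rcases mul_self_nonneg B with _
        have hB2pos : 0 < B ^ 2 := lt_of_le_of_ne (sq_nonneg B) (Ne.symm (pow_ne_zero 2 hBne))
        rw [le_div_iff₀ hB2pos] at this
        nlinarith [sq_nonneg B, this]
      rw [discrim, ← hCeq, hBzero]; ring_nf; nlinarith
    · exact discrim_le_zero key
  have hB2 : B ^ 2 ≤ A * C := by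
    rw [discrim] at hdisc; nlinarith
  calc |B| = Real.sqrt (B ^ 2) := by rw [Real.sqrt_sq_eq_abs]
    _ ≤ Real.sqrt (A * C) := Real.sqrt_le_sqrt hB2
    _ = Real.sqrt A * Real.sqrt C := Real.sqrt_mul hA0 C

/-- For a quadrature rule with distinct nodes `μ_m ∈ [-1,1]` exact for
polynomials of degree at most `2M+1`, a continuous `u` on `[-1,1]` with Lagrange
interpolant `Iu` at the nodes (degree ≤ M), and any polynomial `φ` of degree ≤ M,
the difference between the continuous and discrete inner products is bounded by
the `L²` interpolation error of `u` times the `L²` norm of `φ`. -/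
theorem quadrature_error_bound (M : ℕ) (μ ω : Fin (M + 1) → ℝ)
    (hμ : ∀ m, μ m ∈ Icc (-1 : ℝ) 1) (hμinj : Function.Injective μ)
    (hquad : ∀ p : Polynomial ℝ, p.degree ≤ (2 * M + 1 : ℕ) →
      ∑ m, ω m * p.eval (μ m) = ∫ x in (-1 : ℝ)..1, p.eval x)
    (u : ℝ → ℝ) (hu : ContinuousOn u (Icc (-1 : ℝ) 1))
    (Iu : Polynomial ℝ) (hIdeg : Iu.degree ≤ M)
    (hI : ∀ m, Iu.eval (μ m) = u (μ m)) :
    ∀ φ : Polynomial ℝ, φ.degree ≤ M →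
      |(∫ x in (-1 : ℝ)..1, u x * φ.eval x) - ∑ m, ω m * u (μ m) * φ.eval (μ m)|
        ≤ Real.sqrt (∫ x in (-1 : ℝ)..1, (u x - Iu.eval x) ^ 2)
            * Real.sqrt (∫ x in (-1 : ℝ)..1, (φ.eval x) ^ 2) := by
  intro φ hφ
  have huIcc : uIcc (-1 : ℝ) 1 = Icc (-1 : ℝ) 1 := uIcc_of_le (by norm_num)
  -- exactness for Iu * φ
  have hdeg : (Iu * φ).degree ≤ (2 * M + 1 : ℕ) := by
    refine (Polynomial.degree_mul_le _ _).trans ?_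
    calc Iu.degree + φ.degree ≤ (M : WithBot ℕ) + (M : WithBot ℕ) := add_le_add hIdeg hφ
      _ = ((M + M : ℕ) : WithBot ℕ) := by norm_cast
      _ ≤ ((2 * M + 1 : ℕ) : WithBot ℕ) := by
          rw [Nat.cast_le]; omega
  have hexact := hquad (Iu * φ) hdeg
  have hsum : ∑ m, ω m * u (μ m) * φ.eval (μ m)
      = ∫ x in (-1 : ℝ)..1, Iu.eval x * φ.eval x := by
    have : ∀ m, ω m * u (μ m) * φ.eval (μ m) = ω m * (Iu * φ).eval (μ m) := by
      intro m; rw [Polynomial.eval_mul, hI m]; ring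
    rw [Finset.sum_congr rfl (fun m _ => this m), hexact]
    simp [Polynomial.eval_mul]
  rw [hsum]
  -- integrability
  have hif : IntervalIntegrable (fun x => u x * φ.eval x) volume (-1) 1 :=
    (huIcc ▸ (hu.mul (Polynomial.continuous φ).continuousOn)).intervalIntegrable
  have hig : IntervalIntegrable (fun x => Iu.eval x * φ.eval x) volume (-1) 1 :=
    (((Polynomial.continuous Iu).mul (Polynomial.continuous φ)).intervalIntegrable _ _)
  have hdiff : (∫ x in (-1 : ℝ)..1, u x * φ.eval x)
      - (∫ x in (-1 : ℝ)..1, Iu.eval x * φ.eval x)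
      = ∫ x in (-1 : ℝ)..1, (u x - Iu.eval x) * φ.eval x := by
    rw [← intervalIntegral.integral_sub hif hig]
    congr 1; funext x; ring
  rw [hdiff]
  exact cauchy_schwarz_interval
    (hu.sub (Polynomial.continuous Iu).continuousOn)
    (Polynomial.continuous φ).continuousOn
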